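/- For density matrices ρ, σ with σ positive definite and any α ∈ [0,1], χ²_{1/2}(ρ,σ) ≤ χ²_α(ρ,σ), i.e., tr[(ρ-σ)σ^{-1/2}(ρ-σ)σ^{-1/2}] ≤ tr[(ρ-σ)σ^{-α}(ρ-σ)σ^{α-1}]; the minimum over α of the α-χ²-divergence is reached at α = 1/2. -/

import Mathlib

open Matrix
open scoped ComplexOrder

/-- The square root of a positive semidefinite matrix, as `Matrix.PosSemidef.sqrt` was defined in the older Mathlib. -/
noncomputable def Matrix.PosSemidef.sqrt {d : ℕ} {A : Matrix (Fin d) (Fin d) ℂ} (hA : A.PosSemidef) :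
    Matrix (Fin d) (Fin d) ℂ :=
  (hA.1.eigenvectorUnitary : Matrix (Fin d) (Fin d) ℂ) *
    Matrix.diagonal ((↑) ∘ (fun x : ℝ => Real.sqrt x) ∘ hA.1.eigenvalues) *
    (star hA.1.eigenvectorUnitary : Matrix (Fin d) (Fin d) ℂ)

/-- The trace norm `‖A‖₁ = tr √(A†A)` of a complex matrix. -/
noncomputable def traceNorm {d : ℕ} (A : Matrix (Fin d) (Fin d) ℂ) : ℝ :=
  ((Matrix.posSemidef_conjTranspose_mul_self A).sqrt.trace).re

/-- Real matrix power of a Hermitian matrix via the spectral decomposition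
(defined as `0` on the kernel for negative exponents, i.e. a pseudo-inverse,
and as the junk value `0` for non-Hermitian input). -/
noncomputable def mrpow {d : ℕ} (σ : Matrix (Fin d) (Fin d) ℂ) (α : ℝ) :
    Matrix (Fin d) (Fin d) ℂ :=
  if hσ : σ.IsHermitian then
    (hσ.eigenvectorUnitary : Matrix (Fin d) (Fin d) ℂ) *
      Matrix.diagonal (fun i => ((hσ.eigenvalues i ^ α : ℝ) : ℂ)) *
      star (hσ.eigenvectorUnitary : Matrix (Fin d) (Fin d) ℂ)
  else 0

/-- The mean α-family of quantum χ²-divergences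
`χ²_α(ρ,σ) = tr[(ρ-σ) σ^{-α} (ρ-σ) σ^{α-1}]` (with pseudo-inverse powers of `σ`). -/
noncomputable def chiAlpha {d : ℕ} (α : ℝ) (ρ σ : Matrix (Fin d) (Fin d) ℂ) : ℝ :=
  (((ρ - σ) * mrpow σ (-α) * (ρ - σ) * mrpow σ (α - 1)).trace).re

private theorem trace_conj_aux {d : ℕ} (Δ U : Matrix (Fin d) (Fin d) ℂ) (f g : Fin d → ℂ) :
    (Δ * (U * Matrix.diagonal f * star U) * Δ * (U * Matrix.diagonal g * star U)).trace
      = ((star U * Δ * U) * Matrix.diagonal f * (star U * Δ * U) * Matrix.diagonal g).trace := by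
  rw [show Δ * (U * Matrix.diagonal f * star U) * Δ * (U * Matrix.diagonal g * star U)
      = (Δ * (U * Matrix.diagonal f * star U) * Δ * (U * Matrix.diagonal g)) * star U by
    simp only [Matrix.mul_assoc], Matrix.trace_mul_comm]
  congr 1
  simp only [Matrix.mul_assoc]

private theorem trace_diag_form {d : ℕ} (A : Matrix (Fin d) (Fin d) ℂ) (hA : A.IsHermitian)
    (f g : Fin d → ℝ) :
    ((A * Matrix.diagonal (fun i => (f i : ℂ)) * A * Matrix.diagonal (fun i => (g i : ℂ))).trace).re
      = ∑ i, ∑ j, Complex.normSq (A i j) * (f j * g i) := by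
  have h1 : ∀ i : Fin d, (A * Matrix.diagonal (fun i => (f i : ℂ)) * A *
        Matrix.diagonal (fun i => (g i : ℂ))) i i
      = ∑ j, A i j * (f j : ℂ) * A j i * (g i : ℂ) := by
    intro i
    rw [Matrix.mul_diagonal, Matrix.mul_apply, Finset.sum_mul]
    congr 1; ext j
    rw [Matrix.mul_diagonal]
  rw [Matrix.trace]
  simp only [Matrix.diag_apply, h1]
  rw [Complex.re_sum]
  congr 1; ext i
  rw [Complex.re_sum]
  congr 1; ext j
  rw [← hA.apply j i]
  rw [show A i j * (f j:ℂ) * star (A i j) * (g i:ℂ)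
      = (A i j * star (A i j)) * ((f j:ℂ) * (g i:ℂ)) by ring,
    Complex.star_def, Complex.mul_conj]
  simp [Complex.ofReal_mul]

private theorem chiAlpha_formula {d : ℕ} (α : ℝ) (ρ σ : Matrix (Fin d) (Fin d) ℂ)
    (hσ : σ.IsHermitian) (hρ : ρ.IsHermitian) :
    chiAlpha α ρ σ = ∑ i, ∑ j,
      Complex.normSq ((star (hσ.eigenvectorUnitary : Matrix (Fin d) (Fin d) ℂ) * (ρ - σ) *
          (hσ.eigenvectorUnitary : Matrix (Fin d) (Fin d) ℂ)) i j) *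
        (hσ.eigenvalues j ^ (-α) * hσ.eigenvalues i ^ (α - 1)) := by
  have hA : ((star (hσ.eigenvectorUnitary : Matrix (Fin d) (Fin d) ℂ)) * (ρ - σ) *
      (hσ.eigenvectorUnitary : Matrix (Fin d) (Fin d) ℂ)).IsHermitian := by
    rw [Matrix.star_eq_conjTranspose]
    exact Matrix.isHermitian_conjTranspose_mul_mul _ (hρ.sub hσ)
  unfold chiAlpha mrpow
  simp only [dif_pos hσ]
  rw [trace_conj_aux, trace_diag_form _ hA]

private theorem amgm_pow (x y : ℝ) (hx : 0 < x) (hy : 0 < y) (α : ℝ) :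
    2 * (y ^ (-(1/2) : ℝ) * x ^ ((1/2 : ℝ) - 1)) ≤
      y ^ (-α) * x ^ (α - 1) + x ^ (-α) * y ^ (α - 1) := by
  set a := y ^ (-α) * x ^ (α - 1) with ha
  set b := x ^ (-α) * y ^ (α - 1) with hb
  set t := y ^ (-(1/2) : ℝ) * x ^ ((1/2 : ℝ) - 1) with ht
  have hapos : 0 < a := mul_pos (Real.rpow_pos_of_pos hy _) (Real.rpow_pos_of_pos hx _)
  have htpos : 0 < t := mul_pos (Real.rpow_pos_of_pos hy _) (Real.rpow_pos_of_pos hx _)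
  have hab : a * b = t * t := by
    rw [ha, hb, ht]
    rw [show y ^ (-α) * x ^ (α - 1) * (x ^ (-α) * y ^ (α - 1))
        = (y ^ (-α) * y ^ (α - 1)) * (x ^ (α-1) * x ^ (-α)) by ring,
      show y ^ (-(1/2):ℝ) * x ^ ((1/2:ℝ) - 1) * (y ^ (-(1/2):ℝ) * x ^ ((1/2:ℝ) - 1))
        = (y ^ (-(1/2):ℝ) * y ^ (-(1/2):ℝ)) * (x ^ ((1/2:ℝ)-1) * x ^ ((1/2:ℝ)-1)) by ring,
      ← Real.rpow_add hy, ← Real.rpow_add hx, ← Real.rpow_add hy, ← Real.rpow_add hx]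
    rw [show -α + (α-1) = (-1:ℝ) by ring, show α - 1 + -α = (-1:ℝ) by ring]
    norm_num
  nlinarith [sq_nonneg (a - t), hapos, htpos]

/-- For density matrices `ρ, σ` with `σ` positive definite and `α ∈ [0,1]`,
`χ²_{1/2}(ρ,σ) ≤ χ²_α(ρ,σ)`: the minimum over `α` is attained at `α = 1/2`. -/
theorem chiAlpha_min_at_half (d : ℕ) (ρ σ : Matrix (Fin d) (Fin d) ℂ)
    (α : ℝ) (hα : α ∈ Set.Icc (0 : ℝ) 1)
    (hρ : ρ.PosSemidef) (hρtr : ρ.trace = 1)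
    (hσ : σ.PosDef) (hσtr : σ.trace = 1) :
    chiAlpha (1/2) ρ σ ≤ chiAlpha α ρ σ := by
  have hσh : σ.IsHermitian := hσ.1
  have hρh : ρ.IsHermitian := hρ.1
  set s : Fin d → ℝ := hσh.eigenvalues with hs
  have hspos : ∀ i, 0 < s i := fun i => hσ.eigenvalues_pos i
  set A : Matrix (Fin d) (Fin d) ℂ :=
    star (hσh.eigenvectorUnitary : Matrix (Fin d) (Fin d) ℂ) * (ρ - σ) *
      (hσh.eigenvectorUnitary : Matrix (Fin d) (Fin d) ℂ) with hAdef
  have hA : A.IsHermitian := by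
    rw [hAdef, Matrix.star_eq_conjTranspose]
    exact Matrix.isHermitian_conjTranspose_mul_mul _ (hρh.sub hσh)
  set c : Fin d → Fin d → ℝ := fun i j => Complex.normSq (A i j) with hc
  have hcnn : ∀ i j, 0 ≤ c i j := fun i j => Complex.normSq_nonneg _
  have hcsym : ∀ i j, c i j = c j i := by
    intro i j
    rw [hc]
    simp only
    rw [← hA.apply j i, Complex.star_def, Complex.normSq_conj]
  rw [chiAlpha_formula (1/2) ρ σ hσh hρh, chiAlpha_formula α ρ σ hσh hρh]
  have hswap : ∑ i, ∑ j, c i j * (s i ^ (-α) * s j ^ (α - 1))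
      = ∑ i, ∑ j, c i j * (s j ^ (-α) * s i ^ (α - 1)) := by
    rw [Finset.sum_comm]
    apply Finset.sum_congr rfl; intro i _
    apply Finset.sum_congr rfl; intro j _
    rw [hcsym j i]
  have key : 2 * ∑ i, ∑ j, c i j * (s j ^ (-(1/2):ℝ) * s i ^ ((1/2:ℝ) - 1))
      ≤ 2 * ∑ i, ∑ j, c i j * (s j ^ (-α) * s i ^ (α - 1)) := by
    calc 2 * ∑ i, ∑ j, c i j * (s j ^ (-(1/2):ℝ) * s i ^ ((1/2:ℝ) - 1))
        = ∑ i, ∑ j, 2 * (c i j * (s j ^ (-(1/2):ℝ) * s i ^ ((1/2:ℝ) - 1))) := by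
          rw [Finset.mul_sum]
          exact Finset.sum_congr rfl fun i _ => Finset.mul_sum _ _ _
      _ ≤ ∑ i, ∑ j, (c i j * (s j ^ (-α) * s i ^ (α - 1))
            + c i j * (s i ^ (-α) * s j ^ (α - 1))) := by
          apply Finset.sum_le_sum; intro i _
          apply Finset.sum_le_sum; intro j _
          nlinarith [amgm_pow (s i) (s j) (hspos i) (hspos j) α, hcnn i j]
      _ = (∑ i, ∑ j, c i j * (s j ^ (-α) * s i ^ (α - 1)))
            + ∑ i, ∑ j, c i j * (s i ^ (-α) * s j ^ (α - 1)) := by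
          rw [← Finset.sum_add_distrib]
          exact Finset.sum_congr rfl fun i _ => Finset.sum_add_distrib
      _ = 2 * ∑ i, ∑ j, c i j * (s j ^ (-α) * s i ^ (α - 1)) := by
          rw [hswap]; ring
  linarith [key]
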